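/- Let x, v ≥ 1 with vx ≥ 3, and let λ be the tuple with v parts all equal to x (so d = v, n = vx). For integers 1 ≤ i, j ≤ vx-2 with i ≠ j, write i = r_i v + p_i and j = r_j v + p_j with 0 ≤ p_i, p_j < v. Then i ≺ j in P(λ) if and only if p_i > p_j and r_i < r_j. In particular, P(λ)∖{0} is isomorphic to the poset on { (r,p) : 0 ≤ r < x, 0 ≤ p < v } ∖ { (0,0), (x-1,v-1) } with (r,p) ≺ (r',p') iff p > p' and r' > r. -/
import Mathlib

set_option maxHeartbeats 1000000


/-- The lattice point `p(b)` of the fundamental parallelepiped `Π_λ`: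
`p(b) = ((Σ_t ⌈bλ_t/(n-1)⌉) - b, ⌈bλ_1/(n-1)⌉, …, ⌈bλ_d/(n-1)⌉) ∈ ℤ^{d+1}`. -/
def pfun (d n : ℕ) (lam : Fin d → ℕ) (b : ℤ) : Fin (d + 1) → ℤ :=
  Fin.cons ((∑ t, ⌈(b * lam t : ℚ) / ((n : ℚ) - 1)⌉) - b)
    (fun t => ⌈(b * lam t : ℚ) / ((n : ℚ) - 1)⌉)

/-- The relation `i ≺ j` of the fundamental parallelepiped poset `P(λ)` on `{0, …, n-2}`:
`i ≺ j` iff there exists `0 < ℓ < n-1` with `p(i) + p(ℓ) = p(j)`. -/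
def precRel (d n : ℕ) (lam : Fin d → ℕ) (i j : ℤ) : Prop :=
  ∃ l : ℤ, 0 < l ∧ l < (n : ℤ) - 1 ∧ pfun d n lam i + pfun d n lam l = pfun d n lam j

/-- Let `x, v ≥ 1` with `vx ≥ 3` and let `λ = (x, …, x)` with `v` parts
(so `d = v`, `n = vx`). For integers `1 ≤ i, j ≤ vx-2` with `i ≠ j`, writing
`i = r_i·v + p_i` and `j = r_j·v + p_j` with `0 ≤ p_i, p_j < v`, one has `i ≺ j` in
`P(λ)` if and only if `p_i > p_j` and `r_i < r_j`. (In particular, `P(λ)∖{0}` is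
isomorphic to the poset on `{(r,p) : 0 ≤ r < x, 0 ≤ p < v} ∖ {(0,0), (x-1,v-1)}` with
`(r,p) ≺ (r',p')` iff `p > p'` and `r' > r`.) -/
theorem stmt_10 (x v : ℕ) (hx : 1 ≤ x) (hv : 1 ≤ v) (hvx : 3 ≤ v * x)
    (i j : ℤ) (hi0 : 1 ≤ i) (hi1 : i ≤ (v : ℤ) * x - 2)
    (hj0 : 1 ≤ j) (hj1 : j ≤ (v : ℤ) * x - 2) (hij : i ≠ j)
    (ri p1 rj p2 : ℤ)
    (hdi : i = ri * v + p1) (hp1 : 0 ≤ p1) (hp1' : p1 < v)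
    (hdj : j = rj * v + p2) (hp2 : 0 ≤ p2) (hp2' : p2 < v) :
    precRel v (v * x) (fun _ => x) i j ↔ (p2 < p1 ∧ ri < rj) := by
  have hv0 : (0:ℤ) < (v:ℤ) := by exact_mod_cast hv
  have hx0 : (0:ℤ) < (x:ℤ) := by exact_mod_cast hx
  have hn3 : (3:ℤ) ≤ (v:ℤ) * x := by exact_mod_cast hvx
  have hD : (0:ℚ) < ((v * x : ℕ) : ℚ) - 1 := by
    have : (3:ℚ) ≤ ((v*x:ℕ):ℚ) := by exact_mod_cast hvx
    linarith
  -- key ceiling formula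
  have key : ∀ b R P : ℤ, b = R * v + P → 0 ≤ R → R * v ≤ (v:ℤ) * x - 2 → 0 ≤ P → P < v →
      1 ≤ b → ⌈((b : ℚ) * (x:ℕ)) / (((v * x : ℕ) : ℚ) - 1)⌉ = R + 1 := by
    intro b R P hb hR hRv hP hPv hb1
    have hRx : R ≤ (x:ℤ) - 1 := by nlinarith
    have h1 : 0 < R + P * x := by
      rcases le_or_gt 1 P with hP1 | hP1
      · nlinarith
      · have hP0 : P = 0 := le_antisymm (by linarith) hP
        subst hP0; nlinarith
    have h2 : R + P * x ≤ (v:ℤ) * x - 1 := by nlinarith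
    have hlow : (R:ℤ) * ((v:ℤ) * x - 1) < b * x := by nlinarith
    have hhigh : b * (x:ℤ) ≤ (R + 1) * ((v:ℤ) * x - 1) := by nlinarith
    have hlowQ : (R:ℚ) * ((v:ℚ) * x - 1) < (b:ℚ) * x := by exact_mod_cast hlow
    have hhighQ : (b:ℚ) * (x:ℚ) ≤ ((R:ℚ) + 1) * ((v:ℚ) * x - 1) := by exact_mod_cast hhigh
    have hcast : ((v * x : ℕ) : ℚ) = (v:ℚ) * x := by push_cast; ring
    rw [Int.ceil_eq_iff, hcast]
    constructor
    · rw [lt_div_iff₀ (by rw [hcast] at hD; exact hD)]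
      push_cast
      linear_combination hlowQ
    · rw [div_le_iff₀ (by rw [hcast] at hD; exact hD)]
      push_cast
      linear_combination hhighQ
  have hri0 : 0 ≤ ri := by
    rcases le_or_gt 0 ri with h | h
    · exact h
    · exfalso
      have h2 : ri * v ≤ -1 * v := mul_le_mul_of_nonneg_right (by linarith) hv0.le
      linarith
  have hrj0 : 0 ≤ rj := by
    rcases le_or_gt 0 rj with h | h
    · exact h
    · exfalso
      have h2 : rj * v ≤ -1 * v := mul_le_mul_of_nonneg_right (by linarith) hv0.le
      linarith
  have hCi : ⌈((i : ℚ) * (x:ℕ)) / (((v * x : ℕ) : ℚ) - 1)⌉ = ri + 1 :=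
    key i ri p1 hdi hri0 (by linarith) hp1 hp1' hi0
  have hCj : ⌈((j : ℚ) * (x:ℕ)) / (((v * x : ℕ) : ℚ) - 1)⌉ = rj + 1 :=
    key j rj p2 hdj hrj0 (by linarith) hp2 hp2' hj0
  constructor
  · rintro ⟨l, hl0, hl1, heq⟩
    have hl1' : l < (v:ℤ) * x - 1 := by push_cast at hl1; linarith
    have ht := congrFun heq (Fin.succ ⟨0, hv⟩)
    have h0 := congrFun heq 0
    simp only [pfun, Pi.add_apply, Fin.cons_succ, Fin.cons_zero, Finset.sum_const,
      Finset.card_univ, Fintype.card_fin, nsmul_eq_mul] at ht h0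
    rw [hCi, hCj] at ht
    rw [hCi, hCj] at h0
    have hClv : ⌈((l : ℚ) * (x:ℕ)) / (((v * x : ℕ) : ℚ) - 1)⌉ = rj + 1 - (ri + 1) := by
      linarith
    have h6 : (v:ℤ) * ⌈((l : ℚ) * (x:ℕ)) / (((v * x : ℕ) : ℚ) - 1)⌉
        = (v:ℤ) * (rj + 1 - (ri + 1)) := by rw [hClv]
    have hlij : i + l = j := by
      rw [h6] at h0
      linarith
    have hleq : l = (rj - ri) * v + (p2 - p1) := by linear_combination hdj - hdi + hlij
    have hp21 : p2 < p1 := by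
      by_contra hcon
      push_neg at hcon
      have hR0 : 0 ≤ rj - ri := by
        rcases le_or_gt 0 (rj - ri) with h | h
        · exact h
        · exfalso
          have h2 : (rj - ri) * v ≤ -1 * v := mul_le_mul_of_nonneg_right (by linarith) hv0.le
          linarith
      have hCl : ⌈((l : ℚ) * (x:ℕ)) / (((v * x : ℕ) : ℚ) - 1)⌉ = (rj - ri) + 1 :=
        key l (rj - ri) (p2 - p1) hleq hR0 (by linarith) (by linarith) (by linarith) hl0
      rw [hCl] at ht
      linarith
    refine ⟨hp21, ?_⟩
    by_contra h
    push_neg at h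
    have h2 : (rj - ri) * v ≤ 0 * v := mul_le_mul_of_nonneg_right (by linarith) hv0.le
    linarith
  · rintro ⟨hp21, hrij⟩
    have hd : j - i = (rj - ri - 1) * v + ((v:ℤ) + p2 - p1) := by linear_combination hdj - hdi
    have hl0 : 0 < j - i := by
      have h2 : 0 ≤ (rj - ri - 1) * v := mul_nonneg (by linarith) hv0.le
      linarith
    refine ⟨j - i, hl0, ?_, ?_⟩
    · push_cast; linarith
    · have hCl := key (j - i) (rj - ri - 1) ((v:ℤ) + p2 - p1) hd (by linarith) (by linarith)
        (by linarith) (by linarith) hl0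
      funext k
      refine Fin.cases ?_ (fun t => ?_) k
      · simp only [pfun, Pi.add_apply, Fin.cons_zero, Finset.sum_const,
          Finset.card_univ, Fintype.card_fin, nsmul_eq_mul]
        rw [hCi, hCj, hCl]
        ring
      · simp only [pfun, Pi.add_apply, Fin.cons_succ]
        rw [hCi, hCj, hCl]
        ring
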